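/- Let (R, P, X) be a subproblem where R is a clique, every vertex of P ∪ X is adjacent to all of R, and every vertex adjacent to all of R lies in R ∪ P ∪ X. If P = ∅, then R is a maximal clique of G if and only if X = ∅. -/

import Mathlib

open SimpleGraph

/-- A maximal clique: a clique not properly contained in any other clique. -/
def MaximalClique {V : Type*} (G : SimpleGraph V) (S : Set V) : Prop :=
  G.IsClique S ∧ ∀ T : Set V, G.IsClique T → S ⊆ T → S = T

/-- The graph obtained from `G` by deleting vertex `u` (removing all its incident edges). -/
def delVert {V : Type*} (G : SimpleGraph V) (u : V) : SimpleGraph V where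
  Adj a b := G.Adj a b ∧ a ≠ u ∧ b ≠ u
  symm := by constructor; intro a b h; exact ⟨h.1.symm, h.2.2, h.2.1⟩
  loopless := by constructor; intro a h; exact G.irrefl h.1

theorem stmt_19 {V : Type*} [Fintype V] (G : SimpleGraph V) (R P X : Set V)
    (hR : G.IsClique R)
    (hadj : ∀ x ∈ P ∪ X, ∀ r ∈ R, G.Adj x r)
    (hclosed : ∀ x, (∀ r ∈ R, G.Adj x r) → x ∈ R ∪ P ∪ X)
    (hP : P = ∅) :
    MaximalClique G R ↔ X = ∅ := by
  subst hP
  constructor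
  · rintro ⟨-, hmax⟩
    by_contra hX
    obtain ⟨x, hx⟩ := Set.nonempty_iff_ne_empty.mpr hX
    have hadjx : ∀ r ∈ R, G.Adj x r := hadj x (Or.inr hx)
    have hxR : x ∉ R := fun h => G.irrefl (hadjx x h)
    have hclq : G.IsClique (insert x R) := by
      intro a ha b hb hab
      rcases ha with rfl | ha
      · rcases hb with rfl | hb
        · exact absurd rfl hab
        · exact hadjx b hb
      · rcases hb with rfl | hb
        · exact (hadjx a ha).symm
        · exact hR ha hb hab
    have := hmax _ hclq (Set.subset_insert x R)
    exact hxR (this ▸ Set.mem_insert x R)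
  · rintro rfl
    refine ⟨hR, fun T hT hRT => Set.Subset.antisymm hRT fun t ht => ?_⟩
    by_contra htR
    have : ∀ r ∈ R, G.Adj t r := fun r hr =>
      hT ht (hRT hr) (fun h => htR (h ▸ hr))
    rcases hclosed t this with (h | h) | h
    · exact htR h
    · exact h
    · exact h
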